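/- arXiv:1203.2889 — 7 statements merged into one kernel-verified Lean document; each statement's English description precedes it below -/
import Mathlib

section
/- Let k be a field of characteristic ≠ 2, V a finite-dimensional k-vector space, and Q a quadratic form on V whose polar form is nondegenerate. Let g be a unit of Cl(V,Q) lying in the even part Cl₊(V,Q) such that g · ι(v) · g⁻¹ ∈ ι(V) for all v ∈ V. Then reverse(g)·g is a scalar: there exists c ∈ k with reverse(g)·g = c·1. (This is the well-definedness of the norm map Nm : CSpin(V) → 𝔾ₘ, g ↦ ι(g)g.) -/
open CliffordAlgebra

section aux

variable {R : Type*} [CommRing R] {M : Type*} [AddCommGroup M] [Module R M]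
variable {Q : QuadraticForm R M}

local infixl:70 "⌋" => CliffordAlgebra.contractLeft (R := R) (M := M) (Q := Q)

/-- The contraction is a twisted derivation. -/
lemma aux_contract_mul (d : Module.Dual R M) (x y : CliffordAlgebra Q) :
    d⌋(x * y) = (d⌋x) * y + involute x * (d⌋y) := by
  induction x using CliffordAlgebra.induction generalizing y with
  | algebraMap r =>
    rw [contractLeft_algebraMap_mul, contractLeft_algebraMap, zero_mul, zero_add,
      AlgHom.commutes]
  | ι m =>
    rw [contractLeft_ι_mul, contractLeft_ι, involute_ι, Algebra.smul_def, neg_mul,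
      sub_eq_add_neg]
  | mul a b ha hb =>
    rw [mul_assoc, ha, hb, ha, map_mul]
    noncomm_ring
  | add a b ha hb =>
    rw [add_mul, map_add, ha, hb, map_add, map_add, add_mul]
    noncomm_ring

/-- The supercommutator with `ι v` is contraction with the polar form of `v`. -/
lemma aux_ι_mul_sub (v : M) (x : CliffordAlgebra Q) :
    ι Q v * x - involute x * ι Q v = (QuadraticMap.polarBilin Q v)⌋x := by
  induction x using CliffordAlgebra.induction with
  | algebraMap r =>
    rw [contractLeft_algebraMap, AlgHom.commutes, Algebra.commutes, sub_self]
  | ι m =>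
    rw [involute_ι, contractLeft_ι, neg_mul, sub_neg_eq_add, ι_mul_ι_add_swap,
      QuadraticMap.polarBilin_apply_apply]
  | mul a b ha hb =>
    have h : ι Q v * (a * b) - involute (a * b) * ι Q v
        = (ι Q v * a - involute a * ι Q v) * b
          + involute a * (ι Q v * b - involute b * ι Q v) := by
      rw [map_mul]; noncomm_ring
    rw [h, ha, hb, aux_contract_mul]
  | add a b ha hb =>
    rw [map_add, map_add, add_mul, mul_add, ← ha, ← hb]
    noncomm_ring

/-- Contraction by a functional vanishing on `W` kills the subalgebra generated by `ι '' W`. -/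
lemma aux_contract_adjoin_zero {W : Submodule R M} {d : Module.Dual R M}
    (hd : ∀ w ∈ W, d w = 0) {x : CliffordAlgebra Q}
    (hx : x ∈ Algebra.adjoin R (⇑(ι Q) '' (W : Set M))) :
    d⌋x = 0 := by
  induction hx using Algebra.adjoin_induction with
  | mem z hz =>
    obtain ⟨w, hw, rfl⟩ := hz
    rw [contractLeft_ι, hd w hw, map_zero]
  | algebraMap r => exact CliffordAlgebra.contractLeft_algebraMap (Q := Q) d r
  | add a b _ _ ha hb => rw [map_add, ha, hb, add_zero]
  | mul a b _ _ ha hb => rw [aux_contract_mul, ha, hb, zero_mul, mul_zero, add_zero]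

lemma aux_involute_adjoin_mem {W : Submodule R M} {x : CliffordAlgebra Q}
    (hx : x ∈ Algebra.adjoin R (⇑(ι Q) '' (W : Set M))) :
    involute x ∈ Algebra.adjoin R (⇑(ι Q) '' (W : Set M)) := by
  induction hx using Algebra.adjoin_induction with
  | mem z hz =>
    obtain ⟨w, hw, rfl⟩ := hz
    rw [involute_ι, ← map_neg]
    exact Algebra.subset_adjoin ⟨-w, neg_mem hw, rfl⟩
  | algebraMap r => rw [AlgHom.commutes]; exact algebraMap_mem _ r
  | add a b _ _ ha hb => rw [map_add]; exact add_mem ha hb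
  | mul a b _ _ ha hb => rw [map_mul]; exact mul_mem ha hb

/-- `ι v` supercommutes with the subalgebra generated by a subspace orthogonal to `v`. -/
lemma aux_ι_mul_adjoin {W : Submodule R M} {v : M}
    (hv : ∀ w ∈ W, QuadraticMap.polar Q v w = 0) {x : CliffordAlgebra Q}
    (hx : x ∈ Algebra.adjoin R (⇑(ι Q) '' (W : Set M))) :
    ι Q v * x = involute x * ι Q v := by
  have h0 : (QuadraticMap.polarBilin Q v)⌋x = 0 :=
    aux_contract_adjoin_zero (fun w hw => hv w hw) hx
  have := aux_ι_mul_sub v x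
  rw [h0, sub_eq_zero] at this
  exact this

end aux

section field

variable {k : Type*} [Field k] {V : Type*} [AddCommGroup V] [Module k V]
variable {Q : QuadraticForm k V}

local infixl:70 "⌋" => CliffordAlgebra.contractLeft (R := k) (M := V) (Q := Q)

/-- Main induction: over an orthogonal basis, an element of the subalgebra generated by the
span of part of the basis, all of whose basis contractions vanish, is a scalar. -/
lemma aux_scalar_of_contract_zero {n : ℕ} (b : Module.Basis (Fin n) k V)
    (horth : ∀ i j, i ≠ j → QuadraticMap.polar Q (b i) (b j) = 0)
    (S : Finset (Fin n)) :
    ∀ x ∈ Algebra.adjoin k (⇑(ι Q) '' ((Submodule.span k (b '' S)) : Set V)),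
      (∀ i ∈ S, (b.coord i)⌋x = 0) → ∃ c : k, x = algebraMap k (CliffordAlgebra Q) c := by
  classical
  induction S using Finset.induction_on with
  | empty =>
    intro x hx _
    have : Algebra.adjoin k (⇑(ι Q) '' ((Submodule.span k (b '' (∅ : Finset (Fin n)))) : Set V))
        ≤ ⊥ := by
      apply Algebra.adjoin_le
      rintro z ⟨w, hw, rfl⟩
      simp only [Finset.coe_empty, Set.image_empty, Submodule.span_empty,
        Submodule.bot_coe, Set.mem_singleton_iff] at hw
      subst hw
      rw [map_zero]
      exact zero_mem ⊥
    obtain ⟨c, hc⟩ := Algebra.mem_bot.mp (this hx)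
    exact ⟨c, hc.symm⟩
  | @insert j T hj IH =>
    intro x hx hcon
    set e : CliffordAlgebra Q := ι Q (b j) with he
    set WT : Submodule k V := Submodule.span k (b '' T) with hWT
    set AT : Subalgebra k (CliffordAlgebra Q) := Algebra.adjoin k (⇑(ι Q) '' (WT : Set V))
      with hAT
    -- the polar form of `b j` vanishes on `WT`
    have hpol : ∀ w ∈ WT, QuadraticMap.polar Q (b j) w = 0 := by
      intro w hw
      have : WT ≤ LinearMap.ker (QuadraticMap.polarBilin Q (b j)) := by
        rw [hWT, Submodule.span_le]
        rintro _ ⟨i, hi, rfl⟩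
        simp only [SetLike.mem_coe, LinearMap.mem_ker]
        exact horth j i (fun h => hj (h ▸ hi))
      simpa using this hw
    have hcomm : ∀ y ∈ AT, e * y = involute y * e := fun y hy => aux_ι_mul_adjoin hpol hy
    have hcomm' : ∀ y ∈ AT, y * e = e * involute y := by
      intro y hy
      have := hcomm (involute y) (aux_involute_adjoin_mem hy)
      rw [involute_involute] at this
      exact this.symm
    -- decompose x = a + e * c with a c ∈ AT
    have hdecomp : ∃ a ∈ AT, ∃ c ∈ AT, x = a + e * c := by
      clear hcon
      induction hx using Algebra.adjoin_induction with
      | mem z hz =>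
        obtain ⟨w, hw, rfl⟩ := hz
        have hw' : w ∈ Submodule.span k (insert (b j) (b '' T)) := by
          simpa [Finset.coe_insert, Set.image_insert_eq] using hw
        obtain ⟨r, z, hz, rfl⟩ := Submodule.mem_span_insert.mp hw'
        refine ⟨ι Q z, Algebra.subset_adjoin ⟨z, hz, rfl⟩,
          algebraMap k _ r, algebraMap_mem _ r, ?_⟩
        rw [map_add, map_smul, ← Algebra.commutes, ← Algebra.smul_def, add_comm]
      | algebraMap r =>
        exact ⟨algebraMap k _ r, algebraMap_mem _ r, 0, zero_mem _, by rw [mul_zero, add_zero]⟩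
      | add p q hp hq ihp ihq =>
        obtain ⟨a, ha, c, hc, rfl⟩ := ihp
        obtain ⟨a', ha', c', hc', rfl⟩ := ihq
        exact ⟨a + a', add_mem ha ha', c + c', add_mem hc hc', by rw [mul_add]; abel⟩
      | mul p q hp hq ihp ihq =>
        obtain ⟨a, ha, c, hc, rfl⟩ := ihp
        obtain ⟨a', ha', c', hc', rfl⟩ := ihq
        refine ⟨a * a' + Q (b j) • (involute c * c'),
          add_mem (mul_mem ha ha') (Subalgebra.smul_mem _ (mul_mem
            (aux_involute_adjoin_mem hc) hc') _),
          involute a * c' + c * a',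
          add_mem (mul_mem (aux_involute_adjoin_mem ha) hc') (mul_mem hc ha'), ?_⟩
        have h1 : a * (e * c') = e * (involute a * c') := by
          rw [← mul_assoc, hcomm' a ha, mul_assoc]
        have h2 : (e * c) * a' = e * (c * a') := by rw [mul_assoc]
        have h3 : (e * c) * (e * c') = Q (b j) • (involute c * c') := by
          rw [mul_assoc, ← mul_assoc c e, hcomm' c hc, ← mul_assoc, ← mul_assoc,
            ι_sq_scalar, ← Algebra.smul_def, smul_mul_assoc]
        calc (a + e * c) * (a' + e * c')
            = a * a' + (a * (e * c') + ((e * c) * a' + (e * c) * (e * c'))) := by noncomm_ring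
          _ = a * a' + Q (b j) • (involute c * c')
              + e * (involute a * c' + c * a') := by
              rw [h1, h2, h3]; noncomm_ring
    obtain ⟨a, ha, c, hc, rfl⟩ := hdecomp
    -- the coordinate functional of `j` vanishes on `WT`
    have hdT : ∀ i, i ∉ T → ∀ w ∈ WT, b.coord i w = 0 := by
      intro i hi w hw
      have : WT ≤ LinearMap.ker (b.coord i) := by
        rw [hWT, Submodule.span_le]
        rintro _ ⟨l, hl, rfl⟩
        simp only [SetLike.mem_coe, LinearMap.mem_ker, Module.Basis.coord_apply, Module.Basis.repr_self]
        exact Finsupp.single_eq_of_ne' (fun h => hi (h ▸ hl))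
      simpa using this hw
    -- contract with `b.coord j` to see `c = 0`
    have hc0 : c = 0 := by
      have h1 : (b.coord j)⌋(a + e * c) = c := by
        rw [map_add, aux_contract_adjoin_zero (hdT j hj) ha, zero_add, he,
          contractLeft_ι_mul, aux_contract_adjoin_zero (hdT j hj) hc, mul_zero, sub_zero,
          Module.Basis.coord_apply, Module.Basis.repr_self, Finsupp.single_eq_same, one_smul]
      rw [← h1]
      exact hcon j (Finset.mem_insert_self j T)
    subst hc0
    rw [mul_zero, add_zero] at hcon ⊢
    exact IH a ha (fun i hi => hcon i (Finset.mem_insert_of_mem hi))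

end field

/-- Over a field of characteristic ≠ 2, with `Q` a quadratic form with nondegenerate polar
form, for an even unit `g` of the Clifford algebra with `g ι(V) g⁻¹ ⊆ ι(V)`, the element
`reverse(g) * g` is a scalar.  This is the well-definedness of the norm map
`Nm : CSpin(V) → 𝔾ₘ`. -/
theorem cspin_norm_scalar (k : Type*) [Field k] (h2 : (2 : k) ≠ 0)
    (V : Type*) [AddCommGroup V] [Module k V] [FiniteDimensional k V]
    (Q : QuadraticForm k V)
    (hQ : LinearMap.BilinForm.Nondegenerate (QuadraticMap.polarBilin Q))
    (g : (CliffordAlgebra Q)ˣ)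
    (hg : (g : CliffordAlgebra Q) ∈ CliffordAlgebra.even Q)
    (hconj : ∀ v : V, ∃ w : V,
      (g : CliffordAlgebra Q) * CliffordAlgebra.ι Q v *
        ((g⁻¹ : (CliffordAlgebra Q)ˣ) : CliffordAlgebra Q) = CliffordAlgebra.ι Q w) :
    ∃ c : k, CliffordAlgebra.reverse (Q := Q) (g : CliffordAlgebra Q) * (g : CliffordAlgebra Q) =
      algebraMap k (CliffordAlgebra Q) c := by
  classical
  haveI : Invertible (2 : k) := invertibleOfNonzero h2
  set G : CliffordAlgebra Q := (g : CliffordAlgebra Q) with hG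
  set Gi : CliffordAlgebra Q := ((g⁻¹ : (CliffordAlgebra Q)ˣ) : CliffordAlgebra Q) with hGi
  set α : CliffordAlgebra Q := reverse (Q := Q) G * G with hα
  have hGGi : G * Gi = 1 := g.mul_inv
  have hGiG : Gi * G = 1 := g.inv_mul
  -- step 1: reverse fixes the conjugates
  have hrev : ∀ v : V, reverse (Q := Q) Gi * ι Q v * reverse (Q := Q) G = G * ι Q v * Gi := by
    intro v
    obtain ⟨w, hw⟩ := hconj v
    have : reverse (Q := Q) (G * ι Q v * Gi) = G * ι Q v * Gi := by
      rw [hw, reverse_ι]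
    rw [reverse.map_mul, reverse.map_mul, reverse_ι, ← mul_assoc] at this
    exact this
  -- step 2: α commutes with all ι v
  have hcommα : ∀ v : V, α * ι Q v = ι Q v * α := by
    intro v
    have h1 : reverse (Q := Q) G * reverse (Q := Q) Gi = 1 := by
      rw [← reverse.map_mul, hGiG, reverse.map_one]
    calc α * ι Q v = reverse (Q := Q) G * (G * ι Q v * Gi) * G := by
            rw [hα]; rw [mul_assoc, mul_assoc, mul_assoc, mul_assoc, hGiG, mul_one]
      _ = reverse (Q := Q) G * (reverse (Q := Q) Gi * ι Q v * reverse (Q := Q) G) * G := by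
            rw [hrev]
      _ = ι Q v * α := by
            rw [hα, ← mul_assoc, ← mul_assoc, ← mul_assoc, h1, one_mul, mul_assoc]
  -- step 3: α is even, so involute α = α
  have hαeven : α ∈ CliffordAlgebra.evenOdd Q 0 := by
    have h1 : reverse (Q := Q) G ∈ CliffordAlgebra.evenOdd Q 0 :=
      (reverse_mem_evenOdd_iff (Q := Q)).mpr hg
    exact (zero_add (0 : ZMod 2)) ▸ SetLike.mul_mem_graded h1 hg
  have hαinv : involute α = α := involute_eq_of_mem_even hαeven
  -- step 4: all contractions of α vanish
  have hcontract : ∀ d : Module.Dual k V, CliffordAlgebra.contractLeft d α = 0 := by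
    intro d
    obtain ⟨v, rfl⟩ : ∃ v : V, QuadraticMap.polarBilin Q v = d :=
      ⟨(LinearMap.BilinForm.toDual (QuadraticMap.polarBilin Q) hQ).symm d,
        (LinearMap.BilinForm.toDual (QuadraticMap.polarBilin Q) hQ).apply_symm_apply d⟩
    have := aux_ι_mul_sub (Q := Q) v α
    rw [hαinv, ← hcommα v, sub_self] at this
    exact this.symm
  -- step 5: orthogonal basis and induction
  obtain ⟨b, hb⟩ := LinearMap.BilinForm.exists_orthogonal_basis
    (B := QuadraticMap.polarBilin Q) (LinearMap.isSymm_def.mpr (fun x y => QuadraticMap.polar_comm Q x y))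
  have horth : ∀ i j, i ≠ j → QuadraticMap.polar Q (b i) (b j) = 0 := fun i j hij => hb hij
  have hxtop : α ∈ Algebra.adjoin k
      (⇑(CliffordAlgebra.ι Q) ''
        ((Submodule.span k (b '' (Finset.univ : Finset (Fin (Module.finrank k V))))) : Set V)) := by
    have hspan : Submodule.span k
        (b '' (Finset.univ : Finset (Fin (Module.finrank k V)))) = ⊤ := by
      rw [Finset.coe_univ, Set.image_univ]
      exact b.span_eq
    rw [hspan]
    induction α using CliffordAlgebra.induction with
    | algebraMap r => exact algebraMap_mem _ r
    | ι m => exact Algebra.subset_adjoin ⟨m, Submodule.mem_top, rfl⟩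
    | mul a b ha hb => exact mul_mem ha hb
    | add a b ha hb => exact add_mem ha hb
  obtain ⟨c, hc⟩ := aux_scalar_of_contract_zero b horth Finset.univ α hxtop
    (fun i _ => hcontract (b.coord i))
  exact ⟨c, hc⟩
end

section
/- Let V be a finite-dimensional real vector space, ψ a symmetric bilinear form on V, Q the quadratic form Q(v) = ψ(v,v), and v₁, v₂ ∈ V with ψ(v₁,v₂) = 0. For a ∈ Cl(V,Q), let Tr(a) denote the trace of the ℝ-linear operator of left multiplication by a on Cl(V,Q). Then the bilinear pairing ⟨x,y⟩ := Tr(reverse(x)·y·ι(v₁)·ι(v₂)) on Cl(V,Q) is skew-symmetric: ⟨y,x⟩ = −⟨x,y⟩ for all x, y ∈ Cl(V,Q). -/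
open CliffordAlgebra LinearMap

section Aux

variable {V : Type*} [AddCommGroup V] [Module ℝ V] [FiniteDimensional ℝ V]
variable {Q : QuadraticForm ℝ V}

set_option linter.unusedSectionVars false

/-- trace of left multiplication -/
noncomputable def KS.tr (Q : QuadraticForm ℝ V) (a : CliffordAlgebra Q) : ℝ :=
  LinearMap.trace ℝ (CliffordAlgebra Q) (LinearMap.mulLeft ℝ a)

/-- trace of right multiplication -/
noncomputable def KS.trR (Q : QuadraticForm ℝ V) (a : CliffordAlgebra Q) : ℝ :=
  LinearMap.trace ℝ (CliffordAlgebra Q) (LinearMap.mulRight ℝ a)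

lemma KS.mulLeft_eq (a : CliffordAlgebra Q) :
    LinearMap.mulLeft ℝ a = LinearMap.mul ℝ (CliffordAlgebra Q) a :=
  LinearMap.ext fun _ => rfl

lemma KS.mulRight_eq (a : CliffordAlgebra Q) :
    LinearMap.mulRight ℝ a = (LinearMap.mul ℝ (CliffordAlgebra Q)).flip a :=
  LinearMap.ext fun _ => rfl

lemma KS.tr_add (a b : CliffordAlgebra Q) : KS.tr Q (a + b) = KS.tr Q a + KS.tr Q b := by
  unfold KS.tr; rw [KS.mulLeft_eq, KS.mulLeft_eq, KS.mulLeft_eq, map_add, map_add]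

lemma KS.tr_smul (c : ℝ) (a : CliffordAlgebra Q) : KS.tr Q (c • a) = c * KS.tr Q a := by
  unfold KS.tr; rw [KS.mulLeft_eq, KS.mulLeft_eq, map_smul, map_smul, smul_eq_mul]

lemma KS.tr_neg (a : CliffordAlgebra Q) : KS.tr Q (-a) = -KS.tr Q a := by
  have := KS.tr_smul (-1 : ℝ) a
  simpa using this

lemma KS.tr_zero : KS.tr Q 0 = 0 := by
  unfold KS.tr; rw [KS.mulLeft_eq, map_zero, map_zero]

lemma KS.trR_add (a b : CliffordAlgebra Q) : KS.trR Q (a + b) = KS.trR Q a + KS.trR Q b := by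
  unfold KS.trR; rw [KS.mulRight_eq, KS.mulRight_eq, KS.mulRight_eq, map_add, map_add]

lemma KS.trR_smul (c : ℝ) (a : CliffordAlgebra Q) : KS.trR Q (c • a) = c * KS.trR Q a := by
  unfold KS.trR; rw [KS.mulRight_eq, KS.mulRight_eq, map_smul, map_smul, smul_eq_mul]

lemma KS.trR_zero : KS.trR Q 0 = 0 := by
  unfold KS.trR; rw [KS.mulRight_eq, map_zero, map_zero]

lemma KS.tr_cyclic (a b : CliffordAlgebra Q) : KS.tr Q (a * b) = KS.tr Q (b * a) := by
  unfold KS.tr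
  rw [LinearMap.mulLeft_mul, LinearMap.mulLeft_mul]
  exact LinearMap.trace_mul_comm ℝ _ _

lemma KS.tr_reverse (a : CliffordAlgebra Q) : KS.tr Q (reverse (Q := Q) a) = KS.trR Q a := by
  unfold KS.tr KS.trR
  have h : LinearMap.mulLeft ℝ (reverse (Q := Q) a) =
      (reverse (Q := Q)) * (LinearMap.mulRight ℝ a * (reverse (Q := Q))) := by
    ext x
    simp [Module.End.mul_apply, reverse.map_mul, reverse_reverse]
  rw [h, LinearMap.trace_mul_comm, mul_assoc]
  have h2 : (reverse (Q := Q)) * (reverse (Q := Q)) = (1 : Module.End ℝ (CliffordAlgebra Q)) := by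
    ext x; exact reverse_reverse x
  rw [h2, mul_one]

lemma KS.tr_conj (σ : CliffordAlgebra Q →ₐ[ℝ] CliffordAlgebra Q)
    (hσ : ∀ x, σ (σ x) = x) (a : CliffordAlgebra Q) : KS.tr Q (σ a) = KS.tr Q a := by
  unfold KS.tr
  have h : LinearMap.mulLeft ℝ (σ a) =
      σ.toLinearMap * (LinearMap.mulLeft ℝ a * σ.toLinearMap) := by
    ext x
    simp only [LinearMap.mulLeft_apply, Module.End.mul_apply, AlgHom.toLinearMap_apply,
      map_mul]
    rw [hσ x]
  rw [h, LinearMap.trace_mul_comm, mul_assoc]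
  have h2 : σ.toLinearMap * σ.toLinearMap = (1 : Module.End ℝ (CliffordAlgebra Q)) := by
    ext x; exact hσ x
  rw [h2, mul_one]

lemma KS.trR_conj (σ : CliffordAlgebra Q →ₐ[ℝ] CliffordAlgebra Q)
    (hσ : ∀ x, σ (σ x) = x) (a : CliffordAlgebra Q) : KS.trR Q (σ a) = KS.trR Q a := by
  unfold KS.trR
  have h : LinearMap.mulRight ℝ (σ a) =
      σ.toLinearMap * (LinearMap.mulRight ℝ a * σ.toLinearMap) := by
    ext x
    simp only [LinearMap.mulRight_apply, Module.End.mul_apply, AlgHom.toLinearMap_apply,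
      map_mul]
    rw [hσ x]
  rw [h, LinearMap.trace_mul_comm, mul_assoc]
  have h2 : σ.toLinearMap * σ.toLinearMap = (1 : Module.End ℝ (CliffordAlgebra Q)) := by
    ext x; exact hσ x
  rw [h2, mul_one]

/-- The key lemma: the trace of left multiplication equals the trace of right
multiplication on a Clifford algebra of a (symmetric-bilinear-induced) quadratic form. -/
lemma KS.tr_eq_trR (ψ : V →ₗ[ℝ] V →ₗ[ℝ] ℝ) (hsymm : ∀ u v : V, ψ u v = ψ v u)
    (Q : QuadraticForm ℝ V) (hQ : ∀ v : V, Q v = ψ v v) (a : CliffordAlgebra Q) :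
    KS.tr Q a = KS.trR Q a := by
  classical
  -- orthogonal basis
  obtain ⟨b, hb⟩ := LinearMap.BilinForm.exists_orthogonal_basis
    (B := ψ) (show ψ.IsSymm from ⟨fun x y => hsymm x y⟩)
  set g : Fin (Module.finrank ℝ V) → CliffordAlgebra Q := fun i => ι Q (b i) with hg
  have hborth : ∀ i j : Fin (Module.finrank ℝ V), i ≠ j → ψ (b i) (b j) = 0 :=
    fun i j hij => LinearMap.isOrthoᵢ_def.mp hb i j hij
  -- Q-orthogonality of distinct basis vectors
  have hQorth : ∀ i j : Fin (Module.finrank ℝ V), i ≠ j → Q.IsOrtho (b i) (b j) := by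
    intro i j hij
    unfold QuadraticMap.IsOrtho
    rw [hQ, hQ, hQ]
    simp only [map_add, LinearMap.add_apply]
    rw [hborth i j hij, hborth j i fun h => hij h.symm]
    ring
  have hanti : ∀ i j : Fin (Module.finrank ℝ V), i ≠ j → g i * g j = -(g j * g i) := by
    intro i j hij
    exact ι_mul_ι_comm_of_isOrtho (hQorth i j hij)
  have hsq : ∀ i : Fin (Module.finrank ℝ V), g i * g i = algebraMap ℝ _ (Q (b i)) := fun i => ι_sq_scalar Q (b i)
  -- sign flip linear maps
  set f : Fin (Module.finrank ℝ V) → (V →ₗ[ℝ] V) :=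
    fun j => LinearMap.id - (2 : ℝ) • ((b.coord j).smulRight (b j)) with hf
  have hf_apply : ∀ j v, f j v = v - (2 * b.repr v j) • b j := by
    intro j v
    simp only [hf, LinearMap.sub_apply, LinearMap.smul_apply, LinearMap.smulRight_apply,
      Module.Basis.coord_apply, LinearMap.id_apply]
    rw [two_mul, add_smul, two_smul]
  have hψdiag : ∀ (v : V) (j : Fin (Module.finrank ℝ V)), ψ v (b j) = b.repr v j * ψ (b j) (b j) := by
    intro v j
    conv_lhs => rw [← Module.Basis.sum_repr b v]
    rw [map_sum, LinearMap.sum_apply]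
    rw [Finset.sum_eq_single j]
    · simp [smul_eq_mul]
    · intro i _ hij
      simp [map_smul, hborth i j hij, smul_eq_mul]
    · simp
  have hfQ : ∀ j v, Q (f j v) = Q v := by
    intro j v
    rw [hQ, hQ, hf_apply]
    have h1 : ψ v (b j) = b.repr v j * ψ (b j) (b j) := hψdiag v j
    have h2 : ψ (b j) v = b.repr v j * ψ (b j) (b j) := by rw [hsymm]; exact h1
    simp only [map_sub, map_smul, LinearMap.sub_apply, LinearMap.smul_apply, smul_eq_mul]
    rw [h1, h2]
    ring
  -- sign flip automorphisms
  set σ : Fin (Module.finrank ℝ V) → (CliffordAlgebra Q →ₐ[ℝ] CliffordAlgebra Q) :=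
    fun j => CliffordAlgebra.lift Q ⟨(ι Q).comp (f j), fun m => by
      rw [LinearMap.comp_apply, ι_sq_scalar, hfQ]⟩ with hσdef
  have hσι : ∀ j v, σ j (ι Q v) = ι Q (f j v) := by
    intro j v
    simp [hσdef, CliffordAlgebra.lift_ι_apply]
  have hreprf : ∀ j i, b.repr (b i) j = if i = j then 1 else 0 := by
    intro j i
    rw [b.repr_self i]
    exact Finsupp.single_apply
  have hff : ∀ j v, f j (f j v) = v := by
    intro j v
    have hr : b.repr (v - (2 * b.repr v j) • b j) j = -(b.repr v j) := by
      rw [map_sub, map_smul]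
      simp [hreprf j j]
      ring
    rw [hf_apply, hf_apply, hr]
    rw [show (2 : ℝ) * -(b.repr v j) = -(2 * b.repr v j) by ring, neg_smul]
    abel
  have hσσ : ∀ j x, σ j (σ j x) = x := by
    intro j x
    induction x using CliffordAlgebra.induction with
    | algebraMap r => simp
    | ι v => rw [hσι, hσι, hff]
    | mul a c ha hc => rw [map_mul, map_mul, ha, hc]
    | add a c ha hc => rw [map_add, map_add, ha, hc]
  have hσg_ne : ∀ j i, i ≠ j → σ j (g i) = g i := by
    intro j i hij
    have : f j (b i) = b i := by
      rw [hf_apply, hreprf j i, if_neg hij, mul_zero, zero_smul, sub_zero]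
    rw [hg]
    simp only
    rw [hσι, this]
  have hσg_eq : ∀ j, σ j (g j) = -(g j) := by
    intro j
    have : f j (b j) = -(b j) := by
      rw [hf_apply, hreprf j j, if_pos rfl, mul_one, two_smul]
      abel
    rw [hg]
    simp only
    rw [hσι, this, map_neg]
  -- words
  set prodL : List (Fin (Module.finrank ℝ V)) → CliffordAlgebra Q := fun l => (l.map g).prod with hprodL
  have prodL_nil : prodL [] = 1 := by simp [hprodL]
  have prodL_cons : ∀ i l, prodL (i :: l) = g i * prodL l := by
    intro i l; simp [hprodL]
  set G : Set (CliffordAlgebra Q) :=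
    {z | ∃ l : List (Fin (Module.finrank ℝ V)), l.Pairwise (· < ·) ∧ z = prodL l} with hG
  set M : Submodule ℝ (CliffordAlgebra Q) := Submodule.span ℝ G with hM
  -- key multiplication lemma
  have keymul : ∀ l : List (Fin (Module.finrank ℝ V)), l.Pairwise (· < ·) → ∀ j : Fin (Module.finrank ℝ V),
      ∃ (c : ℝ) (l' : List (Fin (Module.finrank ℝ V))), l'.Pairwise (· < ·) ∧ (∀ m ∈ l', m ∈ j :: l) ∧
        g j * prodL l = c • prodL l' := by
    intro l
    induction l with
    | nil =>
      intro _ j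
      refine ⟨1, [j], List.pairwise_singleton _ j, ?_, ?_⟩
      · intro m hm; simpa using hm
      · rw [prodL_nil, prodL_cons, prodL_nil, one_smul]
    | cons i t ih =>
      intro hsort j
      have hsort' : t.Pairwise (· < ·) := (List.pairwise_cons.mp hsort).2
      have hlt : ∀ m ∈ t, i < m := (List.pairwise_cons.mp hsort).1
      rcases lt_trichotomy j i with hji | hji | hji
      · refine ⟨1, j :: i :: t, ?_, ?_, ?_⟩
        · rw [List.pairwise_cons]
          refine ⟨?_, hsort⟩
          intro m hm
          rcases List.mem_cons.mp hm with rfl | h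
          · exact hji
          · exact lt_trans hji (hlt m h)
        · intro m hm
          rcases List.mem_cons.mp hm with rfl | h
          · exact List.mem_cons_self
          · exact List.mem_cons_of_mem _ h
        · simp [prodL_cons, one_smul, mul_assoc]
      · -- j = i
        subst hji
        refine ⟨Q (b j), t, hsort', fun m hm => List.mem_cons_of_mem j (List.mem_cons_of_mem j hm), ?_⟩
        rw [prodL_cons, ← mul_assoc, hsq j, Algebra.algebraMap_eq_smul_one, smul_mul_assoc,
          one_mul]
      · -- j > i
        obtain ⟨c, l'', hl''sort, hl''mem, hl''eq⟩ := ih hsort' j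
        have hil'' : ∀ m ∈ l'', i < m := by
          intro m hm
          rcases List.mem_cons.mp (hl''mem m hm) with rfl | h
          · exact hji
          · exact hlt m h
        refine ⟨-c, i :: l'', ?_, ?_, ?_⟩
        · rw [List.pairwise_cons]; exact ⟨hil'', hl''sort⟩
        · intro m hm
          rcases List.mem_cons.mp hm with rfl | h
          · exact List.mem_cons_of_mem j (List.mem_cons_self)
          · rcases List.mem_cons.mp (hl''mem m h) with rfl | h'
            · exact List.mem_cons_self
            · exact List.mem_cons_of_mem j (List.mem_cons_of_mem i h')
        · rw [prodL_cons, prodL_cons, ← mul_assoc, hanti j i (ne_of_gt hji), neg_mul,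
            mul_assoc, hl''eq, mul_smul_comm, neg_smul]
  -- span is everything
  have hone : (1 : CliffordAlgebra Q) ∈ M := by
    apply Submodule.subset_span
    exact ⟨[], List.Pairwise.nil, prodL_nil.symm⟩
  have hmulg : ∀ j : Fin (Module.finrank ℝ V), ∀ z ∈ M, g j * z ∈ M := by
    intro j z hz
    have : M ≤ M.comap (LinearMap.mulLeft ℝ (g j)) := by
      rw [hM]
      apply Submodule.span_le.mpr
      rintro _ ⟨l, hl, rfl⟩
      obtain ⟨c, l', hl', _, heq⟩ := keymul l hl j
      rw [SetLike.mem_coe, Submodule.mem_comap, LinearMap.mulLeft_apply, heq]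
      exact Submodule.smul_mem _ _ (Submodule.subset_span ⟨l', hl', rfl⟩)
    exact this hz
  have hmulι : ∀ v : V, ∀ z ∈ M, ι Q v * z ∈ M := by
    intro v z hz
    have hv : ι Q v = ∑ i : Fin (Module.finrank ℝ V), b.repr v i • g i := by
      conv_lhs => rw [← Module.Basis.sum_repr b v]
      rw [map_sum]
      simp [hg]
    rw [hv, Finset.sum_mul]
    apply Submodule.sum_mem
    intro i _
    rw [smul_mul_assoc]
    exact Submodule.smul_mem _ _ (hmulg i z hz)
  have htop : ∀ a : CliffordAlgebra Q, a ∈ M := by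
    have hC : ∀ x : CliffordAlgebra Q, ∀ z ∈ M, x * z ∈ M := by
      intro x
      induction x using CliffordAlgebra.induction with
      | algebraMap r =>
        intro z hz
        rw [Algebra.algebraMap_eq_smul_one, smul_mul_assoc, one_mul]
        exact Submodule.smul_mem _ _ hz
      | ι v => exact hmulι v
      | mul a c ha hc =>
        intro z hz
        rw [mul_assoc]
        exact ha _ (hc z hz)
      | add a c ha hc =>
        intro z hz
        rw [add_mul]
        exact Submodule.add_mem _ (ha z hz) (hc z hz)
    intro a
    have := hC a 1 hone
    simpa using this
  -- δ vanishes on generators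
  have hδgen : ∀ l : List (Fin (Module.finrank ℝ V)), l.Pairwise (· < ·) →
      KS.tr Q (prodL l) = KS.trR Q (prodL l) := by
    intro l hl
    cases l with
    | nil =>
      rw [prodL_nil]
      unfold KS.tr KS.trR
      congr 1
      ext x
      simp
    | cons j t =>
      have hjt : ∀ m ∈ t, m ≠ j := by
        intro m hm
        exact ne_of_gt ((List.pairwise_cons.mp hl).1 m hm)
      have hfix : σ j (prodL t) = prodL t := by
        rw [hprodL]
        simp only
        rw [map_list_prod, ← List.comp_map]
        congr 1
        apply List.map_congr_left
        intro m hm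
        exact hσg_ne j m (hjt m hm)
      have hflip : σ j (prodL (j :: t)) = -(prodL (j :: t)) := by
        rw [prodL_cons, map_mul, hσg_eq, hfix, neg_mul]
      have h1 : KS.tr Q (prodL (j :: t)) = -(KS.tr Q (prodL (j :: t))) := by
        calc KS.tr Q (prodL (j :: t)) = KS.tr Q (σ j (prodL (j :: t))) :=
              (KS.tr_conj (σ j) (hσσ j) _).symm
          _ = KS.tr Q (-(prodL (j :: t))) := by rw [hflip]
          _ = -(KS.tr Q (prodL (j :: t))) := KS.tr_neg _
      have h2 : KS.trR Q (prodL (j :: t)) = -(KS.trR Q (prodL (j :: t))) := by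
        calc KS.trR Q (prodL (j :: t)) = KS.trR Q (σ j (prodL (j :: t))) :=
              (KS.trR_conj (σ j) (hσσ j) _).symm
          _ = KS.trR Q ((-1 : ℝ) • prodL (j :: t)) := by rw [hflip]; congr 1
          _ = -(KS.trR Q (prodL (j :: t))) := by rw [KS.trR_smul]; ring
      have h1' : KS.tr Q (prodL (j :: t)) = 0 := by linarith
      have h2' : KS.trR Q (prodL (j :: t)) = 0 := by linarith
      rw [h1', h2']
  -- conclude by span induction
  have key : ∀ z ∈ M, KS.tr Q z = KS.trR Q z := by
    intro z hz
    induction hz using Submodule.span_induction with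
    | mem w hw =>
      obtain ⟨l, hl, rfl⟩ := hw
      exact hδgen l hl
    | zero => rw [KS.tr_zero, KS.trR_zero]
    | add u w _ _ hu hw => rw [KS.tr_add, KS.trR_add, hu, hw]
    | smul c u _ hu => rw [KS.tr_smul, KS.trR_smul, hu]
  exact key a (htop a)

end Aux

/-- The Kuga–Satake pairing `⟨x,y⟩ = Tr(reverse(x)·y·ι(v₁)·ι(v₂))` on the Clifford algebra is
skew-symmetric when `ψ(v₁,v₂) = 0`, where `Tr(a)` is the trace of left multiplication by `a`. -/
theorem kuga_satake_pairing_skew (V : Type*) [AddCommGroup V] [Module ℝ V]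
    [FiniteDimensional ℝ V]
    (ψ : V →ₗ[ℝ] V →ₗ[ℝ] ℝ) (hsymm : ∀ u v : V, ψ u v = ψ v u)
    (Q : QuadraticForm ℝ V) (hQ : ∀ v : V, Q v = ψ v v)
    (v₁ v₂ : V) (horth : ψ v₁ v₂ = 0)
    (x y : CliffordAlgebra Q) :
    LinearMap.trace ℝ (CliffordAlgebra Q)
        (LinearMap.mulLeft ℝ (CliffordAlgebra.reverse (Q := Q) y * x *
          CliffordAlgebra.ι Q v₁ * CliffordAlgebra.ι Q v₂)) =
      - LinearMap.trace ℝ (CliffordAlgebra Q)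
        (LinearMap.mulLeft ℝ (CliffordAlgebra.reverse (Q := Q) x * y *
          CliffordAlgebra.ι Q v₁ * CliffordAlgebra.ι Q v₂)) := by
  have hrev : ∀ z : CliffordAlgebra Q, KS.tr Q (reverse (Q := Q) z) = KS.tr Q z := by
    intro z
    rw [KS.tr_reverse, ← KS.tr_eq_trR ψ hsymm Q hQ]
  have hortho : Q.IsOrtho v₂ v₁ := by
    unfold QuadraticMap.IsOrtho
    rw [hQ, hQ, hQ]
    simp only [map_add, LinearMap.add_apply]
    rw [show ψ v₂ v₁ = 0 by rw [hsymm]; exact horth, horth]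
    ring
  have hanti : ι Q v₂ * ι Q v₁ = -(ι Q v₁ * ι Q v₂) := ι_mul_ι_comm_of_isOrtho hortho
  set c := reverse (Q := Q) x * y with hc
  have h1 : reverse (Q := Q) (ι Q v₂ * (ι Q v₁ * c)) =
      reverse (Q := Q) y * x * ι Q v₁ * ι Q v₂ := by
    rw [hc]
    simp [reverse.map_mul, reverse_ι, reverse_reverse, mul_assoc]
  show KS.tr Q _ = - KS.tr Q _
  calc KS.tr Q (reverse (Q := Q) y * x * ι Q v₁ * ι Q v₂)
      = KS.tr Q (reverse (Q := Q) (ι Q v₂ * (ι Q v₁ * c))) := by rw [h1]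
    _ = KS.tr Q (ι Q v₂ * (ι Q v₁ * c)) := hrev _
    _ = KS.tr Q ((ι Q v₁ * c) * ι Q v₂) := KS.tr_cyclic _ _
    _ = KS.tr Q (ι Q v₁ * (c * ι Q v₂)) := by rw [mul_assoc]
    _ = KS.tr Q ((c * ι Q v₂) * ι Q v₁) := KS.tr_cyclic _ _
    _ = KS.tr Q (c * (ι Q v₂ * ι Q v₁)) := by rw [mul_assoc]
    _ = KS.tr Q (-(c * (ι Q v₁ * ι Q v₂))) := by rw [hanti, mul_neg]
    _ = - KS.tr Q (c * (ι Q v₁ * ι Q v₂)) := KS.tr_neg _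
    _ = - KS.tr Q (reverse (Q := Q) x * y * ι Q v₁ * ι Q v₂) := by
        rw [hc, ← mul_assoc]
end

section
/- Let V be a finite-dimensional complex vector space and Q a quadratic form on V whose polar form is nondegenerate. Let ω ∈ V be a nonzero vector with Q(ω) = 0. Then for every element a of the even Clifford algebra Cl₊(V,Q), one has ι(ω)·a = 0 if and only if there exists b ∈ Cl(V,Q) with a = ι(ω)·b. (That is, inside Cl₊(V,Q) the left annihilator of ι(ω) coincides with the intersection of the left ideal ι(ω)·Cl(V,Q) with Cl₊(V,Q).) -/
/-- For a nondegenerate quadratic form `Q` on a finite-dimensional complex vector space and a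
nonzero isotropic vector `ω`, the left annihilator of `ι(ω)` inside the even Clifford algebra
coincides with the intersection of the left ideal `ι(ω)·Cl(V,Q)` with the even part. -/
theorem even_clifford_annihilator (V : Type*) [AddCommGroup V] [Module ℂ V]
    [FiniteDimensional ℂ V]
    (Q : QuadraticForm ℂ V)
    (hQ : LinearMap.BilinForm.Nondegenerate (QuadraticMap.polarBilin Q))
    (ω : V) (hω : ω ≠ 0) (hQω : Q ω = 0)
    (a : CliffordAlgebra Q) (ha : a ∈ CliffordAlgebra.even Q) :
    CliffordAlgebra.ι Q ω * a = 0 ↔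
      ∃ b : CliffordAlgebra Q, a = CliffordAlgebra.ι Q ω * b := by
  constructor
  · intro h
    -- find v with polar Q ω v ≠ 0
    have hv : ∃ v, QuadraticMap.polar Q ω v ≠ 0 := by
      by_contra hc
      push_neg at hc
      exact hω (hQ.1 ω (fun n => hc n))
    obtain ⟨v, hv⟩ := hv
    set c := QuadraticMap.polar Q ω v with hc
    refine ⟨c⁻¹ • (CliffordAlgebra.ι Q v * a), ?_⟩
    have key : CliffordAlgebra.ι Q ω * CliffordAlgebra.ι Q v
        + CliffordAlgebra.ι Q v * CliffordAlgebra.ι Q ω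
        = algebraMap ℂ _ c := CliffordAlgebra.ι_mul_ι_add_swap ω v
    have : (algebraMap ℂ (CliffordAlgebra Q) c) * a
        = CliffordAlgebra.ι Q ω * (CliffordAlgebra.ι Q v * a) := by
      rw [← key, add_mul, mul_assoc, mul_assoc, h, mul_zero, add_zero]
    calc a = c⁻¹ • ((algebraMap ℂ (CliffordAlgebra Q) c) * a) := by
              rw [Algebra.smul_def, ← mul_assoc, ← map_mul, inv_mul_cancel₀ hv, map_one, one_mul]
      _ = CliffordAlgebra.ι Q ω * (c⁻¹ • (CliffordAlgebra.ι Q v * a)) := by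
              rw [this, mul_smul_comm]
  · rintro ⟨b, rfl⟩
    rw [← mul_assoc, CliffordAlgebra.ι_sq_scalar, hQω, map_zero, zero_mul]
end

section
/- Let V be a finite-dimensional complex vector space and Q a quadratic form on V whose polar form is nondegenerate. Let ω ∈ V be a nonzero vector with Q(ω) = 0, and let v ∈ V with Q(v) ≠ 0. The assignment x ↦ ι(ω)·x·ι(v) defines a ℂ-linear endomorphism of the even Clifford algebra Cl₊(V,Q), and both its kernel and its image are equal to the subspace { a ∈ Cl₊(V,Q) | ι(ω)·a = 0 }. -/
open CliffordAlgebra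

/-- For a nondegenerate quadratic form `Q` on a finite-dimensional complex vector space, a
nonzero isotropic vector `ω` and an anisotropic vector `v`, the map `x ↦ ι(ω)·x·ι(v)` is an
endomorphism of the even Clifford algebra whose kernel and image are both equal to
`{a ∈ Cl₊(V,Q) | ι(ω)·a = 0}`. -/
theorem even_clifford_endo_kernel_image (V : Type*) [AddCommGroup V] [Module ℂ V]
    [FiniteDimensional ℂ V]
    (Q : QuadraticForm ℂ V)
    (hQ : LinearMap.BilinForm.Nondegenerate (QuadraticMap.polarBilin Q))
    (ω : V) (hω : ω ≠ 0) (hQω : Q ω = 0)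
    (v : V) (hv : Q v ≠ 0) :
    (∀ a ∈ CliffordAlgebra.even Q,
        CliffordAlgebra.ι Q ω * a * CliffordAlgebra.ι Q v ∈ CliffordAlgebra.even Q) ∧
    (∀ a ∈ CliffordAlgebra.even Q,
        (CliffordAlgebra.ι Q ω * a * CliffordAlgebra.ι Q v = 0 ↔
          CliffordAlgebra.ι Q ω * a = 0)) ∧
    (∀ c ∈ CliffordAlgebra.even Q,
        ((∃ a ∈ CliffordAlgebra.even Q,
            CliffordAlgebra.ι Q ω * a * CliffordAlgebra.ι Q v = c) ↔
          CliffordAlgebra.ι Q ω * c = 0)) := by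
  have hmem : ∀ a ∈ even Q, ∀ x y : V, ι Q x * a * ι Q y ∈ even Q := by
    intro a ha x y
    have ha0 : a ∈ evenOdd Q 0 := ha
    have h1 := SetLike.mul_mem_graded (SetLike.mul_mem_graded
      (ι_mem_evenOdd_one Q x) ha0) (ι_mem_evenOdd_one Q y)
    have : (1 + 0 + 1 : ZMod 2) = 0 := by decide
    rw [this] at h1
    exact h1
  refine ⟨fun a ha => hmem a ha ω v, ?_, ?_⟩
  · intro a ha
    constructor
    · intro h
      have h2 : ι Q ω * a * ι Q v * ι Q v = 0 := by rw [h, zero_mul]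
      rw [mul_assoc, ι_sq_scalar] at h2
      have h3 : ι Q ω * a * algebraMap ℂ _ (Q v) = 0 := h2
      rw [Algebra.algebraMap_eq_smul_one, mul_smul_comm, mul_one] at h3
      exact (smul_eq_zero_iff_right hv).mp h3
    · intro h
      rw [h, zero_mul]
  · intro c hc
    constructor
    · rintro ⟨a, ha, rfl⟩
      rw [← mul_assoc, ← mul_assoc, ι_sq_scalar, hQω, map_zero, zero_mul, zero_mul]
    · intro hωc
      obtain ⟨u, hu⟩ : ∃ u, QuadraticMap.polar Q ω u ≠ 0 := by
        by_contra h
        push_neg at h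
        exact hω (hQ.1 ω fun n => h n)
      refine ⟨(QuadraticMap.polar Q ω u)⁻¹ • (Q v)⁻¹ • (ι Q u * c * ι Q v),
        Submodule.smul_mem _ _ (Submodule.smul_mem _ _ (hmem c hc u v)), ?_⟩
      have hswap : ι Q ω * ι Q u = algebraMap ℂ _ (QuadraticMap.polar Q ω u) - ι Q u * ι Q ω := by
        rw [← ι_mul_ι_add_swap]; abel
      rw [mul_smul_comm, mul_smul_comm, smul_mul_assoc, smul_mul_assoc]
      rw [← mul_assoc, ← mul_assoc, hswap, sub_mul, mul_assoc (ι Q u), hωc, mul_zero, sub_zero]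
      rw [Algebra.algebraMap_eq_smul_one, smul_mul_assoc, one_mul, mul_assoc, ι_sq_scalar,
        Algebra.algebraMap_eq_smul_one, mul_smul_comm, mul_one]
      rw [smul_smul, smul_smul, smul_smul,
        show (QuadraticMap.polar Q ω u)⁻¹ * (Q v)⁻¹ * Q v * QuadraticMap.polar Q ω u = 1 by
          field_simp, one_smul]
end

section
/- Let k be a field of characteristic ≠ 2, V a finite-dimensional k-vector space, and Q a quadratic form on V. Let ω, η, η₂ ∈ V be linearly independent vectors with Q(ω) = 0. Then ι(η)·ι(η₂) does not lie in the left ideal ι(ω)·Cl(V,Q); that is, there is no ξ ∈ Cl(V,Q) with ι(η)·ι(η₂) = ι(ω)·ξ. -/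
open CliffordAlgebra

/-- For a linearly independent family, there are dual functionals. -/
lemma exists_dual_of_linearIndependent {k V : Type*} [Field k] [AddCommGroup V] [Module k V]
    {n : ℕ} {v : Fin n → V} (h : LinearIndependent k v) (i : Fin n) :
    ∃ f : Module.Dual k V, ∀ j, f (v j) = if j = i then 1 else 0 := by
  have hs : LinearIndepOn k id (Set.range v) := (linearIndepOn_id_range_iff h.injective).mpr h
  let b := Module.Basis.extend hs
  have hsub : Set.range v ⊆ hs.extend (Set.subset_univ _) := hs.subset_extend _
  refine ⟨b.coord ⟨v i, hsub ⟨i, rfl⟩⟩, fun j => ?_⟩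
  have hbj : b ⟨v j, hsub ⟨j, rfl⟩⟩ = v j := Module.Basis.extend_apply_self hs _
  rw [← hbj, Module.Basis.coord_apply, Module.Basis.repr_self]
  by_cases hij : j = i
  · subst hij; simp [Finsupp.single_eq_same]
  · rw [Finsupp.single_eq_of_ne' (fun hc => hij (h.injective (congrArg Subtype.val hc))), if_neg hij]

/-- If `ω, η, η₂` are linearly independent with `Q(ω) = 0`, then `ι(η)·ι(η₂)` does not lie in
the left ideal `ι(ω)·Cl(V,Q)`. -/
theorem clifford_not_divisible (k : Type*) [Field k] (h2 : (2 : k) ≠ 0)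
    (V : Type*) [AddCommGroup V] [Module k V] [FiniteDimensional k V]
    (Q : QuadraticForm k V)
    (ω η η₂ : V) (hind : LinearIndependent k ![ω, η, η₂]) (hQω : Q ω = 0) :
    ¬ ∃ ξ : CliffordAlgebra Q,
        CliffordAlgebra.ι Q η * CliffordAlgebra.ι Q η₂ = CliffordAlgebra.ι Q ω * ξ := by
  haveI : Invertible (2 : k) := invertibleOfNonzero h2
  rintro ⟨ξ, hξ⟩
  obtain ⟨f, hf⟩ := exists_dual_of_linearIndependent hind 0
  obtain ⟨g, hg⟩ := exists_dual_of_linearIndependent hind 1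
  obtain ⟨g₂, hg₂⟩ := exists_dual_of_linearIndependent hind 2
  have hfω : f ω = 1 := by simpa using hf 0
  have hfη : f η = 0 := by simpa using hf 1
  have hfη₂ : f η₂ = 0 := by simpa using hf 2
  have hgη : g η = 1 := by simpa using hg 1
  have hgη₂ : g η₂ = 0 := by simpa using hg 2
  have hg₂η₂ : g₂ η₂ = 1 := by simpa using hg₂ 2
  -- contract the equation with f
  have h1 : contractLeft (Q := Q) f (ι Q η * ι Q η₂) = 0 := by
    rw [contractLeft_ι_mul, contractLeft_ι, hfη, hfη₂, zero_smul, map_zero, mul_zero, sub_zero]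
  have h2' : contractLeft (Q := Q) f (ι Q ω * ξ) = ξ - ι Q ω * contractLeft (Q := Q) f ξ := by
    rw [contractLeft_ι_mul, hfω, one_smul]
  have hξeq : ξ = ι Q ω * contractLeft (Q := Q) f ξ := by
    have := h1.symm.trans (by rw [hξ, h2'])
    linear_combination (norm := module) -this
  -- hence ι η * ι η₂ = 0
  have hzero : ι Q η * ι Q η₂ = 0 := by
    rw [hξ, hξeq, ← mul_assoc, ι_sq_scalar, hQω, map_zero, zero_mul]
  -- contract with g to get ι η₂ = 0
  have hη₂zero : ι Q η₂ = (0 : CliffordAlgebra Q) := by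
    have := congrArg (contractLeft (Q := Q) g) hzero
    rwa [contractLeft_ι_mul, contractLeft_ι, hgη, hgη₂, one_smul, map_zero, mul_zero, sub_zero,
      map_zero] at this
  -- contract with g₂ to get 1 = 0
  have : (1 : CliffordAlgebra Q) = 0 := by
    have := congrArg (contractLeft (Q := Q) g₂) hη₂zero
    rwa [contractLeft_ι, hg₂η₂, map_one, map_zero] at this
  exact one_ne_zero this
end

section
/- Let p be a prime, k an algebraically closed field of characteristic p, and W = W(k) the ring of p-typical Witt vectors of k. Let R be a commutative W-algebra such that: p is not a zero divisor in R; the k-algebra R/pR is reduced and finitely generated over k; and every k-algebra homomorphism R/pR → k lifts to a W-algebra homomorphism R → W. Let F ∈ R and r ∈ ℕ be such that for every W-algebra homomorphism φ : R → W, the element φ(F) is divisible by p^r in W. Then F is divisible by p^r in R. (Equivalently: an element f ∈ R[1/p] whose image under every W-point R → W lies in W must lie in R.) -/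
private lemma finiteType_of_factor' {W K B : Type*} [CommRing W] [CommRing K] [CommRing B]
    [Algebra W B] [Algebra K B] (f : W → K)
    (h : ∀ w, algebraMap W B w = algebraMap K B (f w))
    (hft : Algebra.FiniteType W B) : Algebra.FiniteType K B := by
  obtain ⟨S, hS⟩ := hft
  refine ⟨S, eq_top_iff.mpr fun x _ => ?_⟩
  have hx : x ∈ Algebra.adjoin W (S : Set B) := by rw [hS]; trivial
  induction hx using Algebra.adjoin_induction with
  | mem s hs => exact Algebra.subset_adjoin hs
  | algebraMap w => rw [h w]; exact Subalgebra.algebraMap_mem _ _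
  | add a b _ _ ha hb => exact add_mem (ha trivial) (hb trivial)
  | mul a b _ _ ha hb => exact mul_mem (ha trivial) (hb trivial)

/-- In a reduced Jacobson algebra of finite type over an algebraically closed field,
an element killed by every `k`-point is zero. -/
private lemma eq_zero_of_forall_point {k A : Type*} [Field k] [IsAlgClosed k]
    [CommRing A] [Algebra k A] [Algebra.FiniteType k A] [IsReduced A]
    (a : A) (ha : ∀ τ : A →+* k, (∀ c : k, τ (algebraMap k A c) = c) → τ a = 0) :
    a = 0 := by
  haveI : IsJacobsonRing A := isJacobsonRing_of_finiteType (A := k)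
  have hjac : a ∈ (⊥ : Ideal A).jacobson := by
    refine Ideal.mem_sInf.mpr ?_
    rintro m ⟨-, hm⟩
    haveI := hm
    letI : Field (A ⧸ m) := Ideal.Quotient.field m
    haveI : Algebra.FiniteType k (A ⧸ m) :=
      Algebra.FiniteType.of_surjective (Ideal.Quotient.mkₐ k m)
        Ideal.Quotient.mk_surjective
    have hint : (algebraMap k (A ⧸ m)).IsIntegral := by
      obtain ⟨ι, hι, f, hf⟩ := Algebra.FiniteType.iff_quotient_mvPolynomial'.mp
        (inferInstance : Algebra.FiniteType k (A ⧸ m))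
      rw [← f.comp_algebraMap]
      exact MvPolynomial.comp_C_integral_of_surjective_of_isJacobsonRing f.toRingHom hf
    haveI : Algebra.IsIntegral k (A ⧸ m) := Algebra.isIntegral_def.mpr hint
    have hsurj : Function.Surjective (algebraMap k (A ⧸ m)) :=
      IsAlgClosed.algebraMap_bijective_of_isIntegral.2
    have hinj : Function.Injective (algebraMap k (A ⧸ m)) := (algebraMap k (A ⧸ m)).injective
    let ψ : k ≃+* (A ⧸ m) := RingEquiv.ofBijective (algebraMap k (A ⧸ m)) ⟨hinj, hsurj⟩
    have hτ : ∀ c : k, (ψ.symm.toRingHom.comp (Ideal.Quotient.mk m)) (algebraMap k A c) = c := by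
      intro c
      have h1 : Ideal.Quotient.mk m (algebraMap k A c) = ψ c := by
        show _ = algebraMap k (A ⧸ m) c
        rw [IsScalarTower.algebraMap_apply k A (A ⧸ m)]
        rfl
      simp [RingHom.comp_apply, h1]
    have h0 := ha (ψ.symm.toRingHom.comp (Ideal.Quotient.mk m)) hτ
    have hmk : Ideal.Quotient.mk m a = 0 := by
      have := congrArg ψ h0
      simpa using this
    exact Ideal.Quotient.eq_zero_iff_mem.mp hmk
  have hrad : (⊥ : Ideal A).jacobson = ⊥ := by
    apply IsJacobsonRing.out'
    rw [← Ideal.radical_eq_iff]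
    have h2 : (⊥ : Ideal A).radical = nilradical A := rfl
    rw [h2, nilradical_eq_zero]
    rfl
  rw [hrad] at hjac
  exact hjac

/-- Integrality criterion over a smooth `p`-adic base (B. Conrad): let `W = W(k)` with `k`
algebraically closed of characteristic `p`, and let `R` be a `W`-algebra in which `p` is a
nonzerodivisor, with `R/pR` reduced and of finite type, such that every `k`-point of `R/pR`
lifts to a `W`-point of `R`.  If `F ∈ R` specializes to an element divisible by `p^r` under
every `W`-algebra homomorphism `R → W`, then `F` is divisible by `p^r` in `R`. -/
theorem witt_divisibility_from_points (p : ℕ) [Fact p.Prime]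
    (k : Type*) [Field k] [IsAlgClosed k] [CharP k p]
    (R : Type*) [CommRing R] [Algebra (WittVector p k) R]
    (hp : ∀ x : R, (p : R) * x = 0 → x = 0)
    (hred : IsReduced (R ⧸ Ideal.span {(p : R)}))
    (hft : Algebra.FiniteType (WittVector p k) (R ⧸ Ideal.span {(p : R)}))
    -- the `k`-algebra structure on `R/pR` induced by the `W`-algebra structure
    (σ : k →+* (R ⧸ Ideal.span {(p : R)}))
    (hσ : ∀ w : WittVector p k,
      algebraMap (WittVector p k) (R ⧸ Ideal.span {(p : R)}) w = σ (w.coeff 0))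
    -- every `k`-algebra homomorphism `R/pR → k` lifts to a `W`-algebra homomorphism `R → W`
    (hlift : ∀ τ : (R ⧸ Ideal.span {(p : R)}) →+* k, (∀ c : k, τ (σ c) = c) →
      ∃ φ : R →ₐ[WittVector p k] WittVector p k,
        ∀ x : R, τ (Ideal.Quotient.mk (Ideal.span {(p : R)}) x) = (φ x).coeff 0)
    (F : R) (r : ℕ)
    (hF : ∀ φ : R →ₐ[WittVector p k] WittVector p k, (p : WittVector p k) ^ r ∣ φ F) :
    (p : R) ^ r ∣ F := by
  letI : Algebra k (R ⧸ Ideal.span {(p : R)}) := σ.toAlgebra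
  have halg : ∀ c : k, algebraMap k (R ⧸ Ideal.span {(p : R)}) c = σ c := fun _ => rfl
  haveI : Algebra.FiniteType k (R ⧸ Ideal.span {(p : R)}) :=
    finiteType_of_factor' (fun w => w.coeff 0) (fun w => by rw [hσ w, halg]) hft
  have key : ∀ a : R ⧸ Ideal.span {(p : R)},
      (∀ τ : (R ⧸ Ideal.span {(p : R)}) →+* k, (∀ c : k, τ (σ c) = c) → τ a = 0) → a = 0 := by
    intro a ha
    exact eq_zero_of_forall_point a (fun τ hτ => ha τ (fun c => by rw [← halg c]; exact hτ c))
  induction r with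
  | zero => simpa using one_dvd F
  | succ r ih =>
    obtain ⟨G, hG⟩ := ih (fun φ => dvd_trans (pow_dvd_pow _ (Nat.le_succ r)) (hF φ))
    have hGdvd : ∀ φ : R →ₐ[WittVector p k] WittVector p k, (p : WittVector p k) ∣ φ G := by
      intro φ
      obtain ⟨c, hc⟩ := hF φ
      refine ⟨c, ?_⟩
      have hφF : φ F = (p : WittVector p k) ^ r * φ G := by
        rw [hG, map_mul, map_pow, map_natCast]
      have hcancel : (p : WittVector p k) ^ r * φ G
          = (p : WittVector p k) ^ r * ((p : WittVector p k) * c) := by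
        rw [← hφF, hc, pow_succ]; ring
      exact mul_left_cancel₀ (pow_ne_zero r (WittVector.p_nonzero p k)) hcancel
    have hmkG : Ideal.Quotient.mk (Ideal.span {(p : R)}) G = 0 := by
      apply key
      intro τ hτ
      obtain ⟨φ, hφ⟩ := hlift τ hτ
      rw [hφ G]
      obtain ⟨c, hc⟩ := hGdvd φ
      rw [hc, mul_comm]
      exact WittVector.mul_charP_coeff_zero c
    obtain ⟨H, hH⟩ := Ideal.mem_span_singleton.mp (Ideal.Quotient.eq_zero_iff_mem.mp hmkG)
    exact ⟨H, by rw [hG, hH, pow_succ]; ring⟩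
end

section
/- Let R be a commutative ring in which 2 is invertible, M a free R-module, ψ a symmetric bilinear form on M, and Q the quadratic form Q(m) = ψ(m,m). Let π : T(M) → Cl(M,Q) be the canonical surjection from the tensor algebra to the Clifford algebra, and let T₂(M) ⊆ T(M) be the sum of the graded components of degrees 0, 1, and 2. Then the R-linear map β : M ⊗ M → T(M) defined by β(x⊗y) = x⊗y + y⊗x − 2ψ(x,y)·1 has image equal to ker(π) ∩ T₂(M) and kernel equal to the R-span of { x⊗y − y⊗x : x, y ∈ M }. In particular, β induces an isomorphism of the symmetric square Sym²(M) onto ker(π) ∩ T₂(M). -/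
open scoped TensorProduct


namespace SnowAux

variable {R : Type*} [CommRing R] {M : Type*} [AddCommGroup M] [Module R M]

/-- The alternating antisymmetrization map `(v₀, v₁) ↦ v₀ ⊗ v₁ - v₁ ⊗ v₀`. -/
noncomputable def alt2 : M [⋀^Fin 2]→ₗ[R] (M ⊗[R] M) where
  toFun v := v 0 ⊗ₜ[R] v 1 - v 1 ⊗ₜ[R] v 0
  map_update_add' v i x y := by
    fin_cases i <;>
      simp [Function.update_of_ne, TensorProduct.add_tmul, TensorProduct.tmul_add] <;> abel
  map_update_smul' v i c x := by
    fin_cases i <;>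
      simp [Function.update_of_ne, TensorProduct.smul_tmul, TensorProduct.tmul_smul, smul_sub]
  map_eq_zero_of_eq' v i j hv hne := by
    fin_cases i <;> fin_cases j <;> simp_all

noncomputable def famG : ∀ i : ℕ, M [⋀^Fin i]→ₗ[R] (M ⊗[R] M)
  | 2 => alt2
  | _ => 0

noncomputable def famS : ∀ i : ℕ, M [⋀^Fin i]→ₗ[R] R
  | 0 => AlternatingMap.constOfIsEmpty R M (Fin 0) 1
  | _ => 0

noncomputable def famV : ∀ i : ℕ, M [⋀^Fin i]→ₗ[R] M
  | 1 => AlternatingMap.ofSubsingleton R M M 0 LinearMap.id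
  | _ => 0

noncomputable def G : ExteriorAlgebra R M →ₗ[R] (M ⊗[R] M) :=
  ExteriorAlgebra.liftAlternating famG
noncomputable def S : ExteriorAlgebra R M →ₗ[R] R :=
  ExteriorAlgebra.liftAlternating famS
noncomputable def V : ExteriorAlgebra R M →ₗ[R] M :=
  ExteriorAlgebra.liftAlternating famV

open ExteriorAlgebra

@[simp] lemma G_algebraMap (r : R) : G (algebraMap R (ExteriorAlgebra R M) r) = 0 := by
  rw [G, liftAlternating_algebraMap]; simp [famG]

@[simp] lemma G_ι (m : M) : G (ι R m) = 0 := by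
  rw [G, liftAlternating_ι]; simp [famG]

@[simp] lemma G_ι_mul_ι (x y : M) : G (ι R x * ι R y) = x ⊗ₜ[R] y - y ⊗ₜ[R] x := by
  rw [G, liftAlternating_ι_mul, liftAlternating_ι]
  show (famG 2).curryLeft x ![y] = _
  simp [famG, alt2, AlternatingMap.curryLeft]

@[simp] lemma S_algebraMap (r : R) : S (algebraMap R (ExteriorAlgebra R M) r) = r := by
  rw [S, liftAlternating_algebraMap]; simp [famS]

@[simp] lemma S_ι (m : M) : S (ι R m) = 0 := by
  rw [S, liftAlternating_ι]; simp [famS]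

@[simp] lemma S_ι_mul_ι (x y : M) : S (ι R x * ι R y) = 0 := by
  rw [S, liftAlternating_ι_mul, liftAlternating_ι]
  show (famS 2).curryLeft x ![y] = _
  simp [famS]

@[simp] lemma V_algebraMap (r : R) : V (algebraMap R (ExteriorAlgebra R M) r) = 0 := by
  rw [V, liftAlternating_algebraMap]; simp [famV]

@[simp] lemma V_ι (m : M) : V (ι R m) = m := by
  rw [V, liftAlternating_ι]; simp [famV]

@[simp] lemma V_ι_mul_ι (x y : M) : V (ι R x * ι R y) = 0 := by
  rw [V, liftAlternating_ι_mul, liftAlternating_ι]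
  show (famV 2).curryLeft x ![y] = _
  simp [famV]

end SnowAux

namespace SnowAux

variable {R : Type*} [CommRing R] {M : Type*} [AddCommGroup M] [Module R M]

noncomputable def muC (Q : QuadraticForm R M) : M ⊗[R] M →ₗ[R] CliffordAlgebra Q :=
  TensorProduct.lift
    ((LinearMap.mul R (CliffordAlgebra Q)).compl₁₂ (CliffordAlgebra.ι Q) (CliffordAlgebra.ι Q))

@[simp] lemma muC_tmul (Q : QuadraticForm R M) (x y : M) :
    muC Q (x ⊗ₜ[R] y) = CliffordAlgebra.ι Q x * CliffordAlgebra.ι Q y := rfl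

noncomputable def muT : M ⊗[R] M →ₗ[R] TensorAlgebra R M :=
  TensorProduct.lift
    ((LinearMap.mul R (TensorAlgebra R M)).compl₁₂ (TensorAlgebra.ι R) (TensorAlgebra.ι R))

@[simp] lemma muT_tmul (x y : M) :
    muT (x ⊗ₜ[R] y) = TensorAlgebra.ι R x * TensorAlgebra.ι R y := rfl

lemma key (Q : QuadraticForm R M) [Invertible (2 : R)] (r : R) (m : M) (a : M ⊗[R] M)
    (ha : TensorProduct.comm R M M a = -a)
    (h : algebraMap R (CliffordAlgebra Q) r + CliffordAlgebra.ι Q m + muC Q a = 0) :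
    r = 0 ∧ m = 0 ∧ a = 0 := by
  set lam := CliffordAlgebra.equivExterior Q with hlam
  have hGl : ∀ z : M ⊗[R] M, G (lam (muC Q z)) = z - TensorProduct.comm R M M z := by
    intro z
    induction z using TensorProduct.induction_on with
    | zero => simp
    | tmul x y =>
        rw [muC_tmul, hlam, CliffordAlgebra.equivExterior, CliffordAlgebra.changeFormEquiv_apply,
          CliffordAlgebra.changeForm_ι_mul_ι]
        simp only [map_sub, G_ι_mul_ι, G_algebraMap, TensorProduct.comm_tmul, sub_zero]
    | add x y hx hy => rw [map_add, map_add, map_add, hx, hy, map_add]; abel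
  have ha0 : a = 0 := by
    have h2 : G (lam (algebraMap R (CliffordAlgebra Q) r)) + G (lam (CliffordAlgebra.ι Q m)) +
        G (lam (muC Q a)) = 0 := by
      rw [← map_add, ← map_add, ← map_add, ← map_add, h, map_zero, map_zero]
    have e1 : G (lam (algebraMap R (CliffordAlgebra Q) r)) = 0 := by
      simp [hlam, CliffordAlgebra.equivExterior]
    have e2 : G (lam (CliffordAlgebra.ι Q m)) = 0 := by
      simp [hlam, CliffordAlgebra.equivExterior]
    rw [e1, e2, hGl, ha] at h2
    have h3 : (2 : R) • a = 0 := by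
      rw [two_smul]
      simpa [sub_neg_eq_add] using h2
    calc a = ⅟(2:R) • ((2:R) • a) := by rw [invOf_smul_smul]
    _ = 0 := by rw [h3, smul_zero]
  subst ha0
  rw [map_zero, add_zero] at h
  have hm : m = 0 := by
    have := congrArg (fun x => V (lam x)) h
    simpa [hlam, CliffordAlgebra.equivExterior] using this
  subst hm
  have hr : r = 0 := by
    have := congrArg (fun x => S (lam x)) h
    simpa [hlam, CliffordAlgebra.equivExterior] using this
  exact ⟨hr, rfl, rfl⟩

end SnowAux

namespace SnowAux

variable {R : Type*} [CommRing R] {M : Type*} [AddCommGroup M] [Module R M]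

/-- `M` acting on `R × M × (M ⊗ M)` by "multiplication by a degree-one element,
truncated to degree ≤ 2". -/
noncomputable def L : M →ₗ[R] Module.End R (R × M × (M ⊗[R] M)) where
  toFun m :=
    { toFun := fun v => (0, v.1 • m, m ⊗ₜ[R] v.2.1)
      map_add' := fun v w => by simp [add_smul, TensorProduct.tmul_add]
      map_smul' := fun c v => by simp [smul_smul, TensorProduct.tmul_smul] }
  map_add' m m' := LinearMap.ext fun v => by
    show ((0 : R), v.1 • (m + m'), (m + m') ⊗ₜ[R] v.2.1) =
      ((0 : R), v.1 • m, m ⊗ₜ[R] v.2.1) + ((0 : R), v.1 • m', m' ⊗ₜ[R] v.2.1)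
    simp [Prod.ext_iff, smul_add, TensorProduct.add_tmul]
  map_smul' c m := LinearMap.ext fun v => by
    show ((0 : R), v.1 • c • m, (c • m) ⊗ₜ[R] v.2.1) =
      c • ((0 : R), v.1 • m, m ⊗ₜ[R] v.2.1)
    simp only [Prod.smul_mk, smul_zero, Prod.mk.injEq]
    exact ⟨trivial, smul_comm _ _ _, (TensorProduct.smul_tmul' _ _ _).symm⟩

/-- Linear projection of the tensor algebra onto its degree-(0,1,2) components. -/
noncomputable def Phi : TensorAlgebra R M →ₗ[R] R × M × (M ⊗[R] M) :=
  (LinearMap.applyₗ ((1 : R), (0 : M), (0 : M ⊗[R] M))).comp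
    (TensorAlgebra.lift R (L (R := R) (M := M))).toLinearMap

lemma Phi_apply (u : TensorAlgebra R M) :
    Phi u = TensorAlgebra.lift R (L (R := R) (M := M)) u (1, 0, 0) := rfl

@[simp] lemma Phi_one : Phi (1 : TensorAlgebra R M) = (1, 0, 0) := by
  rw [Phi_apply, map_one]; rfl

@[simp] lemma Phi_algebraMap (r : R) :
    Phi (algebraMap R (TensorAlgebra R M) r) = (r, 0, 0) := by
  rw [Phi_apply, AlgHom.commutes, Module.algebraMap_end_apply]
  simp

@[simp] lemma Phi_ι (m : M) : Phi (TensorAlgebra.ι R m) = (0, m, 0) := by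
  rw [Phi_apply, TensorAlgebra.lift_ι_apply]
  simp [L]

@[simp] lemma Phi_ι_mul_ι (x y : M) :
    Phi (TensorAlgebra.ι R x * TensorAlgebra.ι R y) = (0, 0, x ⊗ₜ[R] y) := by
  rw [Phi_apply, map_mul, Module.End.mul_apply, TensorAlgebra.lift_ι_apply,
    TensorAlgebra.lift_ι_apply]
  simp [L]

lemma Phi_muT (z : M ⊗[R] M) : Phi (muT z) = (0, 0, z) := by
  induction z using TensorProduct.induction_on with
  | zero => simp; rfl
  | tmul x y => rw [muT_tmul, Phi_ι_mul_ι]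
  | add x y hx hy => rw [map_add, map_add, hx, hy, Prod.mk_add_mk, Prod.mk_add_mk]; simp

end SnowAux

open SnowAux


/-- (Snowden's appendix.)  For `2` invertible, the map `β(x⊗y) = x⊗y + y⊗x − 2ψ(x,y)·1` from
`M ⊗ M` to the tensor algebra has image `ker(π) ∩ T₂(M)` (where `π : T(M) → Cl(M,Q)` is the
canonical surjection and `T₂(M)` the sum of the components of degrees ≤ 2) and kernel the
span of the commutators `x⊗y − y⊗x`; hence it induces an isomorphism
`Sym²(M) ≅ ker(π) ∩ T₂(M)`. -/
theorem sym_sq_iso_clifford_relations (R : Type*) [CommRing R] [Invertible (2 : R)]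
    (M : Type*) [AddCommGroup M] [Module R M] [Module.Free R M]
    (ψ : M →ₗ[R] M →ₗ[R] R) (hsymm : ∀ x y : M, ψ x y = ψ y x)
    (Q : QuadraticForm R M) (hQ : ∀ m : M, Q m = ψ m m)
    (π : TensorAlgebra R M →ₐ[R] CliffordAlgebra Q)
    (hπ : π = RingCon.mkₐ R (CliffordAlgebra.ringCon Q))
    (T₂ : Submodule R (TensorAlgebra R M))
    (hT₂ : T₂ =
      (LinearMap.range (TensorAlgebra.ι R : M →ₗ[R] TensorAlgebra R M)) ^ 0 ⊔
      (LinearMap.range (TensorAlgebra.ι R : M →ₗ[R] TensorAlgebra R M)) ^ 1 ⊔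
      (LinearMap.range (TensorAlgebra.ι R : M →ₗ[R] TensorAlgebra R M)) ^ 2)
    (β : M ⊗[R] M →ₗ[R] TensorAlgebra R M)
    (hβ : ∀ x y : M, β (x ⊗ₜ[R] y) =
      TensorAlgebra.ι R x * TensorAlgebra.ι R y + TensorAlgebra.ι R y * TensorAlgebra.ι R x -
        (2 * ψ x y) • (1 : TensorAlgebra R M)) :
    LinearMap.range β = LinearMap.ker π.toLinearMap ⊓ T₂ ∧
    LinearMap.ker β =
      Submodule.span R {z : M ⊗[R] M | ∃ x y : M, z = x ⊗ₜ[R] y - y ⊗ₜ[R] x} ∧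
    Nonempty (((M ⊗[R] M) ⧸
        Submodule.span R {z : M ⊗[R] M | ∃ x y : M, z = x ⊗ₜ[R] y - y ⊗ₜ[R] x}) ≃ₗ[R]
      ↥(LinearMap.ker π.toLinearMap ⊓ T₂)) := by
  set τ : M ⊗[R] M →ₗ[R] M ⊗[R] M := (TensorProduct.comm R M M).toLinearMap with hτdef
  have hτ_tmul : ∀ x y : M, τ (x ⊗ₜ[R] y) = y ⊗ₜ[R] x := fun x y => rfl
  have hττ : ∀ z, τ (τ z) = z := by
    intro z
    induction z using TensorProduct.induction_on with
    | zero => simp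
    | tmul x y => rw [hτ_tmul, hτ_tmul]
    | add x y hx hy => rw [map_add, map_add, hx, hy]
  set ψ' : M ⊗[R] M →ₗ[R] R := TensorProduct.lift ψ with hψ'def
  have hψ'_tmul : ∀ x y : M, ψ' (x ⊗ₜ[R] y) = ψ x y := fun x y => rfl
  -- β in terms of muT, τ, ψ'
  have hβ' : ∀ z, β z = muT z + muT (τ z) - (2 * ψ' z) • (1 : TensorAlgebra R M) := by
    intro z
    induction z using TensorProduct.induction_on with
    | zero => simp
    | tmul x y => rw [hβ, hτ_tmul, muT_tmul, muT_tmul, hψ'_tmul]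
    | add x y hx hy =>
        rw [map_add, hx, hy, map_add, map_add, map_add, map_add, mul_add, add_smul]
        abel
  have hπι : ∀ m : M, π (TensorAlgebra.ι R m) = CliffordAlgebra.ι Q m := by
    intro m; rw [hπ]; rfl
  have hπmuT : ∀ z, π (muT z) = muC Q z := by
    intro z
    induction z using TensorProduct.induction_on with
    | zero => simp
    | tmul x y => rw [muT_tmul, muC_tmul, map_mul, hπι, hπι]
    | add x y hx hy => rw [map_add, map_add, hx, hy, map_add]
  have hpolar : ∀ x y : M, QuadraticMap.polar Q x y = 2 * ψ x y := by
    intro x y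
    rw [QuadraticMap.polar, hQ, hQ, hQ]
    simp only [map_add, LinearMap.add_apply]
    rw [hsymm y x]
    ring
  have hπβ : ∀ z, π (β z) = 0 := by
    intro z
    rw [hβ', map_sub, map_add, hπmuT, hπmuT, map_smul, map_one]
    have : ∀ w, muC Q w + muC Q (τ w) = (2 * ψ' w) • (1 : CliffordAlgebra Q) := by
      intro w
      induction w using TensorProduct.induction_on with
      | zero => simp
      | tmul x y =>
          rw [muC_tmul, hτ_tmul, muC_tmul, CliffordAlgebra.ι_mul_ι_add_swap, hpolar,
            hψ'_tmul, Algebra.algebraMap_eq_smul_one]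
      | add x y hx hy =>
          rw [map_add, map_add, map_add, map_add, mul_add, add_smul, ← hx, ← hy]
          abel
    rw [this, sub_self]
  set p : Submodule R (TensorAlgebra R M) :=
    LinearMap.range (TensorAlgebra.ι R : M →ₗ[R] TensorAlgebra R M) with hpdef
  have hone : (1 : TensorAlgebra R M) ∈ p ^ 0 := by
    rw [pow_zero]
    exact Submodule.one_le.mp le_rfl
  have hβT₂ : ∀ z, β z ∈ T₂ := by
    intro z
    rw [hT₂]
    induction z using TensorProduct.induction_on with
    | zero => simp
    | tmul x y =>
        rw [hβ]
        refine sub_mem (add_mem ?_ ?_) (Submodule.smul_mem _ _ ?_) <;>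
          [skip; skip;
            exact Submodule.mem_sup_left (Submodule.mem_sup_left hone)] <;>
        · refine Submodule.mem_sup_right ?_
          rw [pow_two]
          exact Submodule.mul_mem_mul (LinearMap.mem_range_self _ _) (LinearMap.mem_range_self _ _)
    | add x y hx hy => rw [map_add]; exact add_mem hx hy
  have hp2 : p ^ 2 = LinearMap.range (muT (R := R) (M := M)) := by
    rw [pow_two]
    apply le_antisymm
    · exact Submodule.mul_le.mpr (by rintro a ⟨x, rfl⟩ b ⟨y, rfl⟩; exact ⟨x ⊗ₜ[R] y, rfl⟩)
    · rintro _ ⟨z, rfl⟩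
      induction z using TensorProduct.induction_on with
      | zero => rw [map_zero]; exact zero_mem _
      | tmul x y =>
          rw [muT_tmul]
          exact Submodule.mul_mem_mul (LinearMap.mem_range_self _ _)
            (LinearMap.mem_range_self _ _)
      | add x y hx hy => rw [map_add]; exact add_mem hx hy
  have h12 : ⅟(2 : R) + ⅟(2 : R) = 1 := by rw [← two_mul, mul_invOf_self]
  -- the range statement
  have h1 : LinearMap.range β = LinearMap.ker π.toLinearMap ⊓ T₂ := by
    apply le_antisymm
    · rintro _ ⟨z, rfl⟩
      exact ⟨hπβ z, hβT₂ z⟩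
    · intro u hu
      rw [Submodule.mem_inf] at hu
      obtain ⟨hk, ht⟩ := hu
      rw [LinearMap.mem_ker] at hk
      rw [hT₂] at ht
      obtain ⟨v, hv, w, hw, rfl⟩ := Submodule.mem_sup.mp ht
      obtain ⟨v0, hv0, v1, hv1, rfl⟩ := Submodule.mem_sup.mp hv
      rw [pow_zero] at hv0
      obtain ⟨r, rfl⟩ := Submodule.mem_one.mp hv0
      rw [pow_one] at hv1
      obtain ⟨m, rfl⟩ := hv1
      rw [hp2] at hw
      obtain ⟨t, rfl⟩ := hw
      set a : M ⊗[R] M := ⅟(2 : R) • t - ⅟(2 : R) • τ t with hadef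
      have key_eq : β (⅟(2 : R) • t) +
          (algebraMap R (TensorAlgebra R M) (r + ψ' t) + TensorAlgebra.ι R m + muT a) =
          algebraMap R (TensorAlgebra R M) r + TensorAlgebra.ι R m + muT t := by
        have hXX : muT t = ⅟(2 : R) • muT t + ⅟(2 : R) • muT t := by
          rw [← add_smul, h12, one_smul]
        rw [hβ', hadef, map_sub, map_smul τ, map_smul muT, map_smul muT,
          map_smul ψ', smul_eq_mul, mul_invOf_cancel_left, map_add (algebraMap R _),
          Algebra.algebraMap_eq_smul_one (ψ' t)]
        conv_rhs => rw [hXX]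
        abel
      have hτa : τ a = -a := by
        rw [hadef, map_sub, map_smul, map_smul, hττ, neg_sub]
      have hπ0 : algebraMap R (CliffordAlgebra Q) (r + ψ' t) + CliffordAlgebra.ι Q m +
          muC Q a = 0 := by
        have h5 := congrArg π key_eq
        simp only [map_add, hπβ, zero_add, AlgHom.commutes, hπι, hπmuT] at h5
        have hu : algebraMap R (CliffordAlgebra Q) r + CliffordAlgebra.ι Q m + muC Q t = 0 := by
          have h6 := hk
          simp only [AlgHom.toLinearMap_apply, map_add, AlgHom.commutes, hπι, hπmuT] at h6
          exact h6
        rw [hu] at h5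
        rw [map_add (algebraMap R (CliffordAlgebra Q))]
        exact h5
      obtain ⟨hr0, hm0, ha0⟩ := key (Q := Q) _ m a hτa hπ0
      refine ⟨⅟(2 : R) • t, ?_⟩
      rw [← key_eq, hr0, hm0, ha0, map_zero, map_zero, map_zero, add_zero, add_zero, add_zero]
  -- the kernel statement
  have hspan : ∀ w : M ⊗[R] M,
      w - τ w ∈ Submodule.span R {z : M ⊗[R] M | ∃ x y : M, z = x ⊗ₜ[R] y - y ⊗ₜ[R] x} := by
    intro w
    induction w using TensorProduct.induction_on with
    | zero => rw [map_zero, sub_zero]; exact zero_mem _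
    | tmul x y => exact Submodule.subset_span ⟨x, y, by rw [hτ_tmul]⟩
    | add x y hx hy =>
        rw [map_add]
        have : x + y - (τ x + τ y) = (x - τ x) + (y - τ y) := by abel
        rw [this]
        exact add_mem hx hy
  have h2 : LinearMap.ker β =
      Submodule.span R {z : M ⊗[R] M | ∃ x y : M, z = x ⊗ₜ[R] y - y ⊗ₜ[R] x} := by
    apply le_antisymm
    · intro z hz
      rw [LinearMap.mem_ker] at hz
      have h1' : muT z + muT (τ z) = (2 * ψ' z) • (1 : TensorAlgebra R M) := by
        exact sub_eq_zero.mp ((hβ' z).symm.trans hz)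
      have h3 : z + τ z = 0 := by
        have := congrArg (fun v => (Phi v).2.2) h1'
        simpa [Phi_muT, Prod.smul_mk] using this
      have hzτ : τ z = -z := eq_neg_of_add_eq_zero_left (by rw [add_comm]; exact h3)
      have hz2 : z = ⅟(2 : R) • (z - τ z) := by
        rw [hzτ, sub_neg_eq_add, ← two_smul R, invOf_smul_smul]
      exact hz2 ▸ Submodule.smul_mem _ _ (hspan z)
    · rw [Submodule.span_le]
      rintro _ ⟨x, y, rfl⟩
      rw [SetLike.mem_coe, LinearMap.mem_ker, map_sub, hβ, hβ, hsymm x y]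
      abel
  exact ⟨h1, h2, ⟨((Submodule.quotEquivOfEq _ _ h2.symm).trans β.quotKerEquivRange).trans
    (LinearEquiv.ofEq _ _ h1)⟩⟩
end
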